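/- The Robin model ℋ_R(X, ξ, ξ') = −(κ/(2√π))·exp(−X²/4)·erfc((ξ+ξ')/2), with κ a real constant, satisfies the model equation (−∂²_{XX} − (X/2)∂_X − ∂²_{ξξ} − (ξ/2)∂_ξ − (ξ'/2)∂_{ξ'} − 1/2)ℋ_R = 0 for all real X, ξ, ξ'. -/

import Mathlib

open Real

noncomputable def erfc (z : ℝ) : ℝ :=
  (2 / Real.sqrt π) * ∫ s in Set.Ioi z, Real.exp (-s ^ 2)

lemma gauss_integrable : MeasureTheory.Integrable (fun s : ℝ => Real.exp (-s ^ 2)) := by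
  have := integrable_exp_neg_mul_sq (b := 1) one_pos
  simpa using this

lemma erfc_eq (z : ℝ) :
    erfc z = (2 / Real.sqrt π) *
      ((∫ s : ℝ, Real.exp (-s ^ 2)) - (∫ s in Set.Iic (0:ℝ), Real.exp (-s ^ 2))
        - ∫ s in (0:ℝ)..z, Real.exp (-s ^ 2)) := by
  have h1 : (∫ s in Set.Iic z, Real.exp (-s ^ 2)) + (∫ s in Set.Ioi z, Real.exp (-s ^ 2))
      = ∫ s : ℝ, Real.exp (-s ^ 2) :=
    intervalIntegral.integral_Iic_add_Ioi gauss_integrable.integrableOn gauss_integrable.integrableOn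
  have h2 : (∫ s in Set.Iic z, Real.exp (-s ^ 2)) - (∫ s in Set.Iic (0:ℝ), Real.exp (-s ^ 2))
      = ∫ s in (0:ℝ)..z, Real.exp (-s ^ 2) :=
    intervalIntegral.integral_Iic_sub_Iic gauss_integrable.integrableOn gauss_integrable.integrableOn
  unfold erfc
  rw [← h1, ← h2]; ring

lemma hasDerivAt_erfc (z : ℝ) :
    HasDerivAt erfc (-(2 / Real.sqrt π) * Real.exp (-z ^ 2)) z := by
  have hc : Continuous fun s : ℝ => Real.exp (-s ^ 2) := by continuity
  have h : HasDerivAt (fun z => ∫ s in (0:ℝ)..z, Real.exp (-s ^ 2)) (Real.exp (-z ^ 2)) z :=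
    intervalIntegral.integral_hasDerivAt_right (hc.intervalIntegrable _ _)
      (hc.aestronglyMeasurable.stronglyMeasurableAtFilter) hc.continuousAt
  have h2 := ((h.const_sub ((∫ s : ℝ, Real.exp (-s ^ 2)) -
      (∫ s in Set.Iic (0:ℝ), Real.exp (-s ^ 2)))).const_mul (2 / Real.sqrt π))
  have : (fun z => (2 / Real.sqrt π) *
      ((∫ s : ℝ, Real.exp (-s ^ 2)) - (∫ s in Set.Iic (0:ℝ), Real.exp (-s ^ 2))
        - ∫ s in (0:ℝ)..z, Real.exp (-s ^ 2))) = erfc := by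
    funext z; rw [erfc_eq]
  rw [this] at h2
  rw [show -(2 / Real.sqrt π) * Real.exp (-z ^ 2) = 2 / Real.sqrt π * -Real.exp (-z ^ 2) by ring]
  exact h2

/-- The Robin model `ℋ_R(X,ξ,ξ') = −(κ/(2√π))·exp(−X²/4)·erfc((ξ+ξ')/2)`
satisfies the model equation
`(−∂²_{XX} − (X/2)∂_X − ∂²_{ξξ} − (ξ/2)∂_ξ − (ξ'/2)∂_{ξ'} − 1/2)ℋ_R = 0`
for all real `X, ξ, ξ'`. -/
theorem robin_model_equation (κ : ℝ) :
    let F : ℝ → ℝ → ℝ → ℝ := fun X ξ ξ' =>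
      -(κ / (2 * Real.sqrt π)) * Real.exp (-X ^ 2 / 4) * erfc ((ξ + ξ') / 2)
    ∀ X ξ ξ' : ℝ,
      -(deriv (deriv (fun u => F u ξ ξ')) X) - X / 2 * deriv (fun u => F u ξ ξ') X -
        deriv (deriv (fun v => F X v ξ')) ξ - ξ / 2 * deriv (fun v => F X v ξ') ξ -
        ξ' / 2 * deriv (fun w => F X ξ w) ξ' - (1 / 2) * F X ξ ξ' = 0 := by
  intro F X ξ ξ'
  set c : ℝ := -(κ / (2 * Real.sqrt π)) with hc
  set G : ℝ := erfc ((ξ + ξ') / 2) with hG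
  -- basic derivative of u ↦ exp (-u^2/4)
  have hq : ∀ u : ℝ, HasDerivAt (fun u : ℝ => -u ^ 2 / 4) (-(2 * u) / 4) u := by
    intro u
    have h : HasDerivAt (fun u : ℝ => u ^ 2) (2 * u) u := by
      simpa using hasDerivAt_pow 2 u
    exact h.neg.div_const 4
  have hE : ∀ u : ℝ, HasDerivAt (fun u : ℝ => Real.exp (-u ^ 2 / 4))
      (Real.exp (-u ^ 2 / 4) * (-(2 * u) / 4)) u := fun u => (hq u).exp
  -- first X-derivative
  have h1 : ∀ u : ℝ, HasDerivAt (fun u => F u ξ ξ')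
      (c * (Real.exp (-u ^ 2 / 4) * (-(2 * u) / 4)) * G) u := by
    intro u
    exact ((hE u).const_mul c).mul_const G
  have hd1 : deriv (fun u => F u ξ ξ') = fun u =>
      c * (Real.exp (-u ^ 2 / 4) * (-(2 * u) / 4)) * G := by
    funext u; exact (h1 u).deriv
  -- second X-derivative
  have h2 : HasDerivAt (fun u => c * (Real.exp (-u ^ 2 / 4) * (-(2 * u) / 4)) * G)
      (c * (Real.exp (-X ^ 2 / 4) * (-(2 * X) / 4) * (-(2 * X) / 4)
        + Real.exp (-X ^ 2 / 4) * (-2 / 4)) * G) X := by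
    have hlin : HasDerivAt (fun u : ℝ => -(2 * u) / 4) (-2 / 4) X := by
      have : HasDerivAt (fun u : ℝ => 2 * u) 2 X := by
        simpa using (hasDerivAt_id X).const_mul (2:ℝ)
      exact this.neg.div_const 4
    exact (((hE X).mul hlin).const_mul c).mul_const G
  have hd2 : deriv (deriv (fun u => F u ξ ξ')) X
      = c * (Real.exp (-X ^ 2 / 4) * (-(2 * X) / 4) * (-(2 * X) / 4)
        + Real.exp (-X ^ 2 / 4) * (-2 / 4)) * G := by
    rw [hd1]; exact h2.deriv
  -- ξ-derivatives
  have hin : ∀ v : ℝ, HasDerivAt (fun v : ℝ => (v + ξ') / 2) (1 / 2 : ℝ) v := by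
    intro v
    have : HasDerivAt (fun v : ℝ => v + ξ') 1 v := (hasDerivAt_id v).add_const ξ'
    simpa using this.div_const 2
  have hv1 : ∀ v : ℝ, HasDerivAt (fun v => F X v ξ')
      (c * Real.exp (-X ^ 2 / 4) * (-(2 / Real.sqrt π) * Real.exp (-((v + ξ') / 2) ^ 2) * (1 / 2))) v := by
    intro v
    have hcomp : HasDerivAt (fun v => erfc ((v + ξ') / 2))
        (-(2 / Real.sqrt π) * Real.exp (-((v + ξ') / 2) ^ 2) * (1 / 2)) v :=
      by have := (hasDerivAt_erfc ((v + ξ') / 2)).comp v (hin v); exact this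
    exact hcomp.const_mul (c * Real.exp (-X ^ 2 / 4))
  have hdv1 : deriv (fun v => F X v ξ') = fun v =>
      c * Real.exp (-X ^ 2 / 4) * (-(2 / Real.sqrt π) * Real.exp (-((v + ξ') / 2) ^ 2) * (1 / 2)) := by
    funext v
    have := (hv1 v).deriv
    exact this
  have hv2 : HasDerivAt (fun v =>
      c * Real.exp (-X ^ 2 / 4) * (-(2 / Real.sqrt π) * Real.exp (-((v + ξ') / 2) ^ 2) * (1 / 2)))
      (c * Real.exp (-X ^ 2 / 4) * (-(2 / Real.sqrt π)
        * (Real.exp (-((ξ + ξ') / 2) ^ 2) * -(2 * ((ξ + ξ') / 2) ^ 1 * (1 / 2))) * (1 / 2))) ξ := by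
    have hg : HasDerivAt (fun v : ℝ => -((v + ξ') / 2) ^ 2)
        (-(2 * ((ξ + ξ') / 2) ^ 1 * (1 / 2))) ξ := ((hin ξ).pow 2).neg
    have hexp := hg.exp
    exact ((hexp.const_mul (-(2 / Real.sqrt π))).mul_const (1 / 2)).const_mul
      (c * Real.exp (-X ^ 2 / 4))
  have hdv2 : deriv (deriv (fun v => F X v ξ')) ξ
      = c * Real.exp (-X ^ 2 / 4) * (-(2 / Real.sqrt π)
        * (Real.exp (-((ξ + ξ') / 2) ^ 2) * -(2 * ((ξ + ξ') / 2) ^ 1 * (1 / 2))) * (1 / 2)) := by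
    rw [hdv1]; exact hv2.deriv
  -- ξ'-derivative
  have hin' : HasDerivAt (fun w : ℝ => (ξ + w) / 2) (1 / 2 : ℝ) ξ' := by
    have : HasDerivAt (fun w : ℝ => ξ + w) 1 ξ' := (hasDerivAt_id ξ').const_add ξ
    simpa using this.div_const 2
  have hw1 : HasDerivAt (fun w => F X ξ w)
      (c * Real.exp (-X ^ 2 / 4) * (-(2 / Real.sqrt π) * Real.exp (-((ξ + ξ') / 2) ^ 2) * (1 / 2))) ξ' := by
    have hcomp : HasDerivAt (fun w => erfc ((ξ + w) / 2))
        (-(2 / Real.sqrt π) * Real.exp (-((ξ + ξ') / 2) ^ 2) * (1 / 2)) ξ' :=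
      by have := (hasDerivAt_erfc ((ξ + ξ') / 2)).comp ξ' hin'; exact this
    exact hcomp.const_mul (c * Real.exp (-X ^ 2 / 4))
  -- assemble
  rw [hd2, hd1, hdv2, hdv1, hw1.deriv]
  show _ - (1/2) * (c * Real.exp (-X ^ 2 / 4) * G) = 0
  have hs : Real.sqrt π ≠ 0 := by positivity
  field_simp
  ring
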